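/- arXiv:1809.09852 — 2 statements merged into one kernel-verified Lean document; each statement's English description precedes it below -/
import Mathlib

section
/- For every real number p ≥ 3 there exists a constant C > 0 such that for all real numbers a and b, ||b|^{p-2} b - |a|^{p-2} a - (p-1)|a|^{p-2}(b-a)| ≤ C (|b|^{p-3} + |a|^{p-3}) |b - a|^2. -/
open Set Filter

/-- Derivative of `x ↦ |x|^q * x` is `(q+1) * |x|^q`, for `q ≥ 1`. -/
lemma aux_hasDerivAt (q : ℝ) (hq : 1 ≤ q) (x : ℝ) :
    HasDerivAt (fun y : ℝ => |y| ^ q * y) ((q + 1) * |x| ^ q) x := by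
  rcases eq_or_ne x 0 with rfl | hx
  · -- derivative at 0 is 0
    have hq0 : (0:ℝ) < q := lt_of_lt_of_le one_pos hq
    have h0 : (q + 1) * |(0:ℝ)| ^ q = 0 := by
      simp [Real.zero_rpow hq0.ne']
    rw [h0, hasDerivAt_iff_tendsto_slope]
    have hcont : ContinuousAt (fun y : ℝ => |y| ^ q) 0 :=
      (Real.continuousAt_rpow_const _ _ (Or.inr hq0.le)).comp continuous_abs.continuousAt
    have h1 : Tendsto (fun y : ℝ => |y| ^ q) (nhdsWithin 0 {(0:ℝ)}ᶜ) (nhds 0) := by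
      have := hcont.continuousWithinAt (s := {(0:ℝ)}ᶜ)
      simpa [ContinuousWithinAt, Real.zero_rpow hq0.ne'] using this
    refine h1.congr' ?_
    filter_upwards [self_mem_nhdsWithin] with y hy
    have hy0 : y ≠ 0 := hy
    simp only [slope_def_field, Real.zero_rpow hq0.ne', mul_zero, sub_zero, div_eq_mul_inv]
    field_simp
  · have habs : HasDerivAt (fun y : ℝ => |y|) ((SignType.sign x : ℝ)) x := hasDerivAt_abs hx
    have hpow : HasDerivAt (fun y : ℝ => y ^ q) (q * |x| ^ (q - 1)) (|x|) :=
      Real.hasDerivAt_rpow_const (Or.inr hq)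
    have hcomp : HasDerivAt (fun y : ℝ => |y| ^ q) (q * |x| ^ (q - 1) * (SignType.sign x : ℝ)) x :=
      hpow.comp x habs
    have hmul : HasDerivAt (fun y : ℝ => |y| ^ q * y)
        (q * |x| ^ (q - 1) * (SignType.sign x : ℝ) * x + |x| ^ q * 1) x :=
      hcomp.mul (hasDerivAt_id' x)
    convert hmul using 1
    have hsx : (SignType.sign x : ℝ) * x = |x| := by
      rcases hx.lt_or_gt with h | h
      · simp [h, abs_of_neg h]
      · simp [h, abs_of_pos h]
    have hxpos : (0:ℝ) < |x| := abs_pos.mpr hx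
    have hpow1 : |x| ^ (q - 1) * |x| = |x| ^ q := by
      rw [← Real.rpow_add_one hxpos.ne', sub_add_cancel]
    calc (q + 1) * |x| ^ q = q * (|x| ^ (q - 1) * ((SignType.sign x : ℝ) * x)) + |x| ^ q * 1 := by
          rw [hsx, hpow1]; ring
      _ = q * |x| ^ (q - 1) * (SignType.sign x : ℝ) * x + |x| ^ q * 1 := by ring

/-- MVT bound for `t ↦ t^q` on `[y, x] ⊆ [0, M]`, ordered case. -/
lemma aux_rpow_sub_le' {q M x y : ℝ} (hq : 1 ≤ q) (hy : 0 ≤ y) (hxM : x ≤ M) (hyx : y ≤ x) :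
    |x ^ q - y ^ q| ≤ q * M ^ (q - 1) * |x - y| := by
  rcases eq_or_lt_of_le hyx with rfl | hlt
  · simp
  · obtain ⟨c, hc, hc'⟩ := exists_hasDerivAt_eq_slope (fun t : ℝ => t ^ q)
      (fun t : ℝ => q * t ^ (q - 1)) hlt
      (fun t _ => (Real.hasDerivAt_rpow_const (Or.inr hq)).continuousAt.continuousWithinAt)
      (fun t _ => Real.hasDerivAt_rpow_const (Or.inr hq))
    have hxy : (0:ℝ) < x - y := sub_pos.mpr hlt
    have heq : x ^ q - y ^ q = q * c ^ (q - 1) * (x - y) := by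
      field_simp at hc'
      linarith [hc']
    have hc0 : (0:ℝ) ≤ c := le_trans hy hc.1.le
    have hcM : c ≤ M := le_trans hc.2.le hxM
    have hpow : c ^ (q - 1) ≤ M ^ (q - 1) :=
      Real.rpow_le_rpow hc0 hcM (by linarith)
    have hq0 : (0:ℝ) ≤ q := by linarith
    rw [heq, abs_mul, abs_of_pos hxy]
    have h1 : |q * c ^ (q - 1)| = q * c ^ (q - 1) := by
      exact abs_of_nonneg (mul_nonneg hq0 (Real.rpow_nonneg hc0 _))
    rw [h1]
    exact mul_le_mul_of_nonneg_right (mul_le_mul_of_nonneg_left hpow hq0) hxy.le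

lemma aux_rpow_sub_le {q M x y : ℝ} (hq : 1 ≤ q) (hx : 0 ≤ x) (hy : 0 ≤ y)
    (hxM : x ≤ M) (hyM : y ≤ M) :
    |x ^ q - y ^ q| ≤ q * M ^ (q - 1) * |x - y| := by
  rcases le_total y x with h | h
  · exact aux_rpow_sub_le' hq hy hxM h
  · rw [abs_sub_comm, abs_sub_comm x y]
    exact aux_rpow_sub_le' hq hx hyM h

/-- MVT for `f = |·|^q * ·`, in a form symmetric in `a b`. -/
lemma aux_mvt {q : ℝ} (hq : 1 ≤ q) {a b : ℝ} (hab : a ≠ b) :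
    ∃ c : ℝ, |c| ≤ max |a| |b| ∧ |c - a| ≤ |b - a| ∧
      |b| ^ q * b - |a| ^ q * a = (q + 1) * |c| ^ q * (b - a) := by
  rcases hab.lt_or_gt with h | h
  · obtain ⟨c, hc, hc'⟩ := exists_hasDerivAt_eq_slope (fun t : ℝ => |t| ^ q * t)
      (fun t : ℝ => (q + 1) * |t| ^ q) h
      (fun t _ => (aux_hasDerivAt q hq t).continuousAt.continuousWithinAt)
      (fun t _ => aux_hasDerivAt q hq t)
    refine ⟨c, ?_, ?_, ?_⟩
    · rw [abs_le]
      constructor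
      · calc -(max |a| |b|) ≤ -|a| := by simp
          _ ≤ a := neg_abs_le a
          _ ≤ c := hc.1.le
      · calc c ≤ b := hc.2.le
          _ ≤ |b| := le_abs_self b
          _ ≤ max |a| |b| := le_max_right _ _
    · rw [abs_of_nonneg (by linarith [hc.1.le] : (0:ℝ) ≤ c - a),
        abs_of_pos (by linarith : (0:ℝ) < b - a)]
      linarith [hc.2.le]
    · rw [eq_div_iff (sub_ne_zero.mpr h.ne')] at hc'
      linarith [hc']
  · obtain ⟨c, hc, hc'⟩ := exists_hasDerivAt_eq_slope (fun t : ℝ => |t| ^ q * t)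
      (fun t : ℝ => (q + 1) * |t| ^ q) h
      (fun t _ => (aux_hasDerivAt q hq t).continuousAt.continuousWithinAt)
      (fun t _ => aux_hasDerivAt q hq t)
    refine ⟨c, ?_, ?_, ?_⟩
    · rw [abs_le]
      constructor
      · calc -(max |a| |b|) ≤ -|b| := by simp
          _ ≤ b := neg_abs_le b
          _ ≤ c := hc.1.le
      · calc c ≤ a := hc.2.le
          _ ≤ |a| := le_abs_self a
          _ ≤ max |a| |b| := le_max_left _ _
    · rw [abs_of_nonpos (by linarith [hc.2.le] : c - a ≤ 0),
        abs_of_neg (by linarith : b - a < 0)]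
      linarith [hc.1.le]
    · rw [eq_div_iff (sub_ne_zero.mpr h.ne')] at hc'
      have h2 : (q + 1) * |c| ^ q * (b - a) = -((q + 1) * |c| ^ q * (a - b)) := by ring
      linarith [hc']

/-- For every real `p ≥ 3` there is `C > 0` such that for all `a b : ℝ`,
`||b|^{p-2} b - |a|^{p-2} a - (p-1)|a|^{p-2}(b-a)| ≤ C (|b|^{p-3} + |a|^{p-3}) |b - a|²`. -/
theorem stmt1 (p : ℝ) (hp : 3 ≤ p) :
    ∃ C > (0:ℝ), ∀ a b : ℝ,
      abs (|b| ^ (p - 2) * b - |a| ^ (p - 2) * a - (p - 1) * |a| ^ (p - 2) * (b - a)) ≤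
        C * (|b| ^ (p - 3) + |a| ^ (p - 3)) * |b - a| ^ 2 := by
  refine ⟨(p - 1) * (p - 2), by nlinarith, fun a b => ?_⟩
  rcases eq_or_ne a b with rfl | hab
  · simp
  · obtain ⟨c, hcM, hca, heq⟩ := aux_mvt (q := p - 2) (by linarith) hab
    have key : |b| ^ (p - 2) * b - |a| ^ (p - 2) * a - (p - 1) * |a| ^ (p - 2) * (b - a)
        = (p - 1) * ((|c| ^ (p - 2) - |a| ^ (p - 2)) * (b - a)) := by
      linear_combination heq
    rw [key, abs_mul, abs_mul]
    set M := max |a| |b| with hMdef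
    have hMnn : 0 ≤ M := le_trans (abs_nonneg a) (le_max_left _ _)
    have hM : M ^ (p - 3) ≤ |b| ^ (p - 3) + |a| ^ (p - 3) := by
      rcases max_cases |a| |b| with ⟨h, _⟩ | ⟨h, _⟩ <;> rw [hMdef, h]
      · linarith [Real.rpow_nonneg (abs_nonneg b) (p - 3)]
      · linarith [Real.rpow_nonneg (abs_nonneg a) (p - 3)]
    have hsub : |(|c| ^ (p - 2) - |a| ^ (p - 2))| ≤ (p - 2) * M ^ (p - 3) * |(|c| - |a|)| := by
      have h321 : p - 2 - 1 = p - 3 := by ring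
      have := aux_rpow_sub_le (q := p - 2) (M := M) (by linarith) (abs_nonneg c)
        (abs_nonneg a) hcM (le_max_left _ _)
      rwa [h321] at this
    have hca' : |(|c| - |a|)| ≤ |b - a| := le_trans (abs_abs_sub_abs_le_abs_sub c a) hca
    have hX : |(|c| ^ (p - 2) - |a| ^ (p - 2))| ≤ (p - 2) * (|b| ^ (p - 3) + |a| ^ (p - 3)) * |b - a| := by
      refine le_trans hsub ?_
      have hS : 0 ≤ |b| ^ (p - 3) + |a| ^ (p - 3) :=
        add_nonneg (Real.rpow_nonneg (abs_nonneg b) _) (Real.rpow_nonneg (abs_nonneg a) _)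
      have hp2 : (0:ℝ) ≤ p - 2 := by linarith
      exact mul_le_mul (mul_le_mul_of_nonneg_left hM hp2) hca' (abs_nonneg _)
        (mul_nonneg hp2 hS)
    have h1 : |(|c| ^ (p - 2) - |a| ^ (p - 2))| * |b - a| ≤
        (p - 2) * (|b| ^ (p - 3) + |a| ^ (p - 3)) * |b - a| * |b - a| :=
      mul_le_mul_of_nonneg_right hX (abs_nonneg _)
    have h2 : |p - 1| = p - 1 := abs_of_nonneg (by linarith)
    rw [h2, pow_two]
    nlinarith [mul_le_mul_of_nonneg_left h1 (show (0:ℝ) ≤ p - 1 by linarith)]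
end

section
/- For every real number p with 2 < p < 3 there exists a constant C > 0 such that for all real numbers a and b, ||b|^{p-2} b - |a|^{p-2} a - (p-1)|a|^{p-2}(b-a)| ≤ C |b - a|^{p-1}. -/
open Real Set

lemma rpow_add_le_add_rpow_real {s x y : ℝ} (hs0 : 0 ≤ s) (hs1 : s ≤ 1)
    (hx : 0 ≤ x) (hy : 0 ≤ y) : (x + y) ^ s ≤ x ^ s + y ^ s := by
  have h := NNReal.rpow_add_le_add_rpow x.toNNReal y.toNNReal hs0 hs1
  have := (NNReal.coe_le_coe (r₁ := (x.toNNReal + y.toNNReal) ^ s)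
    (r₂ := x.toNNReal ^ s + y.toNNReal ^ s)).2 h
  push_cast at this
  rwa [Real.coe_toNNReal x hx, Real.coe_toNNReal y hy] at this

lemma rpow_sub_le {s x y : ℝ} (hs0 : 0 ≤ s) (hs1 : s ≤ 1)
    (hx : 0 ≤ x) (hxy : x ≤ y) : y ^ s - x ^ s ≤ (y - x) ^ s := by
  have h : y ^ s ≤ x ^ s + (y - x) ^ s := by
    have := rpow_add_le_add_rpow_real hs0 hs1 hx (sub_nonneg.2 hxy)
    rwa [add_sub_cancel] at this
  linarith

/-- Hölder bound for `|x|^s`. -/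
lemma abs_rpow_sub_abs_rpow_le {s : ℝ} (hs0 : 0 ≤ s) (hs1 : s ≤ 1) (x y : ℝ) :
    abs (|x| ^ s - |y| ^ s) ≤ |x - y| ^ s := by
  rcases le_total |y| |x| with h | h
  · rw [abs_of_nonneg (by
      have := Real.rpow_le_rpow (abs_nonneg y) h hs0; linarith)]
    calc |x| ^ s - |y| ^ s ≤ (|x| - |y|) ^ s := rpow_sub_le hs0 hs1 (abs_nonneg y) h
      _ ≤ |x - y| ^ s := Real.rpow_le_rpow (by linarith) (abs_sub_abs_le_abs_sub x y) hs0
  · rw [abs_sub_comm]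
    rw [abs_of_nonneg (by
      have := Real.rpow_le_rpow (abs_nonneg x) h hs0; linarith)]
    calc |y| ^ s - |x| ^ s ≤ (|y| - |x|) ^ s := rpow_sub_le hs0 hs1 (abs_nonneg x) h
      _ ≤ |x - y| ^ s := by
          rw [abs_sub_comm]
          exact Real.rpow_le_rpow (by linarith) (abs_sub_abs_le_abs_sub y x) hs0

/-- Derivative of `x ↦ |x|^{p-2} x`. -/
lemma hasDerivAt_phi {p : ℝ} (hp : 2 < p) (x : ℝ) :
    HasDerivAt (fun t : ℝ => |t| ^ (p - 2) * t) ((p - 1) * |x| ^ (p - 2)) x := by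
  rcases lt_trichotomy x 0 with hx | hx | hx
  · -- x < 0 : locally f t = -((-t)^(p-1))
    have hneg : HasDerivAt (fun t : ℝ => -t) (-1) x := (hasDerivAt_id x).neg
    have h1 := hneg.rpow_const (p := p - 1) (Or.inl (by linarith : -x ≠ 0))
    have h2 := h1.neg
    have heq : (fun t : ℝ => |t| ^ (p - 2) * t) =ᶠ[nhds x]
        (fun t : ℝ => -((-t) ^ (p - 1))) := by
      filter_upwards [eventually_lt_nhds hx] with t ht
      rw [abs_of_neg ht]
      have : (-t) ^ (p - 1) = (-t) ^ (p - 2) * (-t) := by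
        rw [← Real.rpow_add_one (by linarith : (-t) ≠ 0) (p - 2)]
        ring_nf
      rw [this]; ring
    have := h2.congr_of_eventuallyEq heq
    refine this.congr_deriv ?_
    rw [abs_of_neg hx]
    have h3 : p - 1 - 1 = p - 2 := by ring
    rw [h3]; ring
  · -- x = 0
    subst hx
    have h0 : (p - 1) * |(0:ℝ)| ^ (p - 2) = 0 := by
      simp [Real.zero_rpow (by linarith : p - 2 ≠ 0)]
    rw [h0, hasDerivAt_iff_tendsto_slope]
    have hcont : Filter.Tendsto (fun t : ℝ => |t| ^ (p - 2)) (nhds 0) (nhds 0) := by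
      have h1 : ContinuousAt (fun y : ℝ => y ^ (p - 2)) (|(0:ℝ)|) := by
        simpa using Real.continuousAt_rpow_const 0 (p - 2) (Or.inr (by linarith))
      have h2 := h1.comp (continuous_abs.continuousAt (x := (0:ℝ)))
      have h3 : ((fun y : ℝ => y ^ (p - 2)) ∘ abs) (0 : ℝ) = 0 := by
        simp [Function.comp, Real.zero_rpow (by linarith : p - 2 ≠ 0)]
      have h4 := h2.tendsto
      rw [h3] at h4
      exact h4.congr (fun t => by simp [Function.comp])
    have hcont' := hcont.mono_left (nhdsWithin_le_nhds (s := {(0:ℝ)}ᶜ))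
    refine Filter.Tendsto.congr' ?_ hcont'
    filter_upwards [self_mem_nhdsWithin] with t ht
    have ht' : t ≠ 0 := ht
    have : slope (fun t : ℝ => |t| ^ (p - 2) * t) 0 t = |t| ^ (p - 2) := by
      simp only [slope, vsub_eq_sub, sub_zero, abs_zero,
        Real.zero_rpow (by linarith : p - 2 ≠ 0), mul_zero, zero_mul]
      rw [smul_eq_mul]
      field_simp
    rw [this]
  · -- 0 < x : locally f t = t^(p-1)
    have h1 : HasDerivAt (fun t : ℝ => t ^ (p - 1))
        ((p - 1) * x ^ (p - 1 - 1)) x :=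
      Real.hasDerivAt_rpow_const (Or.inl (ne_of_gt hx))
    have heq : (fun t : ℝ => |t| ^ (p - 2) * t) =ᶠ[nhds x]
        (fun t : ℝ => t ^ (p - 1)) := by
      filter_upwards [eventually_gt_nhds hx] with t ht
      rw [abs_of_pos ht, ← Real.rpow_add_one (ne_of_gt ht) (p - 2)]
      ring_nf
    have := h1.congr_of_eventuallyEq heq
    refine this.congr_deriv ?_
    rw [abs_of_pos hx]
    have h3 : p - 1 - 1 = p - 2 := by ring
    rw [h3]

/-- For every real `p` with `2 < p < 3` there is `C > 0` such that for all `a b : ℝ`,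
`||b|^{p-2} b - |a|^{p-2} a - (p-1)|a|^{p-2}(b-a)| ≤ C |b - a|^{p-1}`. -/
theorem stmt2 (p : ℝ) (hp : 2 < p) (hp' : p < 3) :
    ∃ C > (0:ℝ), ∀ a b : ℝ,
      abs (|b| ^ (p - 2) * b - |a| ^ (p - 2) * a - (p - 1) * |a| ^ (p - 2) * (b - a)) ≤
        C * |b - a| ^ (p - 1) := by
  refine ⟨p - 1, by linarith, fun a b => ?_⟩
  rcases eq_or_ne b a with rfl | hba
  · simp [Real.zero_rpow (by linarith : p - 1 ≠ 0)]
  set f : ℝ → ℝ := fun t => |t| ^ (p - 2) * t with hf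
  set f' : ℝ → ℝ := fun t => (p - 1) * |t| ^ (p - 2) with hf'
  set φ : ℝ →L[ℝ] ℝ := ContinuousLinearMap.smulRight (1 : ℝ →L[ℝ] ℝ) (f' a) with hφ
  have key : ‖f b - f a - φ (b - a)‖ ≤ ((p - 1) * |b - a| ^ (p - 2)) * ‖b - a‖ := by
    apply Convex.norm_image_sub_le_of_norm_hasFDerivWithin_le'
      (f' := fun t => ContinuousLinearMap.smulRight (1 : ℝ →L[ℝ] ℝ) (f' t))
      (fun t _ => ((hasDerivAt_phi hp t).hasFDerivAt).hasFDerivWithinAt)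
      ?_ (convex_uIcc a b) (left_mem_uIcc) (right_mem_uIcc)
    intro t ht
    have hdiff : ContinuousLinearMap.smulRight (1 : ℝ →L[ℝ] ℝ) (f' t) - φ
        = ContinuousLinearMap.smulRight (1 : ℝ →L[ℝ] ℝ) (f' t - f' a) := by
      ext
      simp [hφ, mul_comm, sub_mul]
    rw [hdiff]
    have hnorm : ‖ContinuousLinearMap.smulRight (1 : ℝ →L[ℝ] ℝ) (f' t - f' a)‖
        = ‖f' t - f' a‖ := by
      rw [ContinuousLinearMap.norm_smulRight_apply, norm_one, one_mul]
    rw [hnorm]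
    have h1 : |f' t - f' a| ≤ (p - 1) * |t - a| ^ (p - 2) := by
      have : f' t - f' a = (p - 1) * (|t| ^ (p - 2) - |a| ^ (p - 2)) := by
        simp only [hf']; ring
      rw [this, abs_mul, abs_of_nonneg (by linarith : (0:ℝ) ≤ p - 1)]
      exact mul_le_mul_of_nonneg_left
        (abs_rpow_sub_abs_rpow_le (by linarith) (by linarith) t a) (by linarith)
    have h2 : |t - a| ^ (p - 2) ≤ |b - a| ^ (p - 2) := by
      apply Real.rpow_le_rpow (abs_nonneg _) _ (by linarith)
      exact abs_sub_left_of_mem_uIcc ht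
    calc ‖f' t - f' a‖ ≤ (p - 1) * |t - a| ^ (p - 2) := h1
      _ ≤ (p - 1) * |b - a| ^ (p - 2) :=
        mul_le_mul_of_nonneg_left h2 (by linarith)
  have hφapp : φ (b - a) = (p - 1) * |a| ^ (p - 2) * (b - a) := by
    simp [hφ, hf', mul_comm]
  have hpow : |b - a| ^ (p - 2) * |b - a| = |b - a| ^ (p - 1) := by
    rw [← Real.rpow_add_one (by simpa [sub_eq_zero] using hba) (p - 2)]
    ring_nf
  calc abs (|b| ^ (p - 2) * b - |a| ^ (p - 2) * a - (p - 1) * |a| ^ (p - 2) * (b - a))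
      = ‖f b - f a - φ (b - a)‖ := by rw [hφapp]; rfl
    _ ≤ ((p - 1) * |b - a| ^ (p - 2)) * ‖b - a‖ := key
    _ = (p - 1) * |b - a| ^ (p - 1) := by
        rw [Real.norm_eq_abs, mul_assoc, hpow]
end
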